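/- For fixed positive reals a, b, V, let h_n(Δ) = [∫_0^∞ A^{−a−2} e^{−b/A} (V+A)^{−(n−1)/2} exp(−Δ/(2(V+A))) dA] / [∫_0^∞ A^{−a−1} e^{−b/A} (V+A)^{−(n−1)/2} exp(−Δ/(2(V+A))) dA]. Then for any fixed c > 0, h_n((n−1)(c+V)) → 1/c as n → ∞. -/

import Mathlib

open MeasureTheory Filter Set

noncomputable def gf (V c A : ℝ) : ℝ :=
  Real.log ((c + V) / (V + A)) - (c + V) / (V + A) + 1

lemma phi_mono_ge {s t : ℝ} (hs : 1 ≤ s) (hst : s ≤ t) :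
    Real.log t - t ≤ Real.log s - s := by
  have hs0 : (0:ℝ) < s := lt_of_lt_of_le one_pos hs
  have ht0 : (0:ℝ) < t := lt_of_lt_of_le hs0 hst
  have h1 : Real.log (t / s) ≤ t / s - 1 := Real.log_le_sub_one_of_pos (by positivity)
  rw [Real.log_div (ne_of_gt ht0) (ne_of_gt hs0)] at h1
  have h2 : (t - s) / s ≤ t - s := div_le_self (by linarith) hs
  have h3 : t / s - 1 = (t - s) / s := by field_simp
  linarith
lemma phi_mono_le {s t : ℝ} (ht : 0 < t) (hts : t ≤ s) (hs1 : s ≤ 1) :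
    Real.log t - t ≤ Real.log s - s := by
  have hs0 : (0:ℝ) < s := lt_of_lt_of_le ht hts
  have h1 : Real.log (t / s) ≤ t / s - 1 := Real.log_le_sub_one_of_pos (by positivity)
  rw [Real.log_div (ne_of_gt ht) (ne_of_gt hs0)] at h1
  have h2 : (t - s) / s ≤ t - s := by
    rw [div_le_iff₀ hs0]; nlinarith
  have h3 : t / s - 1 = (t - s) / s := by field_simp
  linarith

section glem
variable {V c : ℝ} (hV : 0 < V) (hc : 0 < c)

lemma tf_pos (hV : 0 < V) (hc : 0 < c) {A : ℝ} (hA : 0 < A) : 0 < (c + V) / (V + A) := by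
  positivity

lemma gf_nonpos (hV : 0 < V) (hc : 0 < c) {A : ℝ} (hA : 0 < A) : gf V c A ≤ 0 := by
  have := Real.log_le_sub_one_of_pos (tf_pos hV hc hA)
  unfold gf; linarith

lemma gf_neg (hV : 0 < V) (hc : 0 < c) {A : ℝ} (hA : 0 < A) (hne : A ≠ c) : gf V c A < 0 := by
  have hne' : (c + V) / (V + A) ≠ 1 := by
    intro h
    rw [div_eq_one_iff_eq (by positivity : (V+A:ℝ) ≠ 0)] at h
    exact hne (by linarith)
  have := Real.log_lt_sub_one_of_pos (tf_pos hV hc hA) hne'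
  unfold gf; linarith

lemma gf_self (hV : 0 < V) (hc : 0 < c) : gf V c c = 0 := by
  unfold gf
  rw [show c + V = V + c by ring, div_self (by positivity), Real.log_one]
  ring

-- t(A) antitone in A
lemma tf_anti (hV : 0 < V) (hc : 0 < c) {A₁ A₂ : ℝ} (h1 : 0 < A₁) (h12 : A₁ ≤ A₂) :
    (c + V) / (V + A₂) ≤ (c + V) / (V + A₁) :=
  div_le_div_of_nonneg_left (by positivity) (by linarith) (by linarith)

lemma gf_mono_left (hV : 0 < V) (hc : 0 < c) {A₁ A₂ : ℝ} (h1 : 0 < A₁) (h12 : A₁ ≤ A₂)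
    (h2c : A₂ ≤ c) : gf V c A₁ ≤ gf V c A₂ := by
  have hs : (1:ℝ) ≤ (c + V) / (V + A₂) := by
    rw [le_div_iff₀ (by linarith)]; linarith
  have := phi_mono_ge hs (tf_anti hV hc h1 h12)
  unfold gf; linarith

lemma gf_anti_right (hV : 0 < V) (hc : 0 < c) {A₁ A₂ : ℝ} (h1 : c ≤ A₁) (h12 : A₁ ≤ A₂) :
    gf V c A₂ ≤ gf V c A₁ := by
  have h10 : 0 < A₁ := lt_of_lt_of_le hc h1
  have hs : (c + V) / (V + A₁) ≤ 1 := by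
    rw [div_le_one (by linarith)]; linarith
  have ht : 0 < (c + V) / (V + A₂) := tf_pos hV hc (lt_of_lt_of_le h10 h12)
  have := phi_mono_le ht (tf_anti hV hc h10 h12) hs
  unfold gf; linarith

lemma gf_contAt (hV : 0 < V) (hc : 0 < c) : ContinuousAt (gf V c) c := by
  have h1 : ContinuousAt (fun A : ℝ => (c + V) / (V + A)) c :=
    ContinuousAt.div continuousAt_const (by fun_prop) (by positivity)
  have h2 : ContinuousAt (fun A : ℝ => Real.log ((c + V) / (V + A))) c :=
    h1.log (by positivity)
  exact (h2.sub h1).add continuousAt_const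

lemma gf_meas (V c : ℝ) : Measurable (gf V c) := by
  unfold gf
  have h1 : Measurable (fun A : ℝ => (c + V) / (V + A)) := by fun_prop
  exact ((Real.measurable_log.comp h1).sub h1).add measurable_const

end glem

lemma base_meas (b q : ℝ) : Measurable (fun A : ℝ => A ^ q * Real.exp (-b / A)) := by
  fun_prop

lemma base_nonneg (b q : ℝ) {A : ℝ} (hA : 0 < A) : 0 ≤ A ^ q * Real.exp (-b / A) := by
  positivity

lemma int_base (b q : ℝ) (hb : 0 < b) (hq : q < -1) :
    IntegrableOn (fun A : ℝ => A ^ q * Real.exp (-b / A)) (Ioi 0) := by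
  have hmeas := base_meas b q
  have h1 : IntegrableOn (fun A : ℝ => A ^ q * Real.exp (-b / A)) (Ioc 0 1) := by
    set k : ℕ := ⌈-q⌉₊ with hk
    have hkq : -q ≤ (k : ℝ) := Nat.le_ceil _
    refine Integrable.mono' (g := fun _ => (k.factorial : ℝ) / b ^ k)
      (integrable_const _) (hmeas.aestronglyMeasurable) ?_
    rw [ae_restrict_iff' measurableSet_Ioc]
    refine Filter.Eventually.of_forall (fun A hA => ?_)
    obtain ⟨hA0, hA1⟩ := hA
    have hx : (0:ℝ) ≤ b / A := by positivity
    -- exp (b/A) ≥ (b/A)^k / k!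
    have hexp : (b / A) ^ k / (k.factorial : ℝ) ≤ Real.exp (b / A) := by
      refine le_trans ?_ (Real.sum_le_exp_of_nonneg hx (k + 1))
      exact Finset.single_le_sum (f := fun i => (b / A) ^ i / (i.factorial : ℝ))
        (fun i _ => by positivity) (Finset.self_mem_range_succ k)
    have hexp2 : Real.exp (-b / A) ≤ (k.factorial : ℝ) * A ^ k / b ^ k := by
      rw [neg_div, Real.exp_neg]
      rw [inv_le_comm₀ (Real.exp_pos _) (by positivity)]
      have heq : ((k.factorial : ℝ) * A ^ k / b ^ k)⁻¹ = (b/A)^k / (k.factorial:ℝ) := by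
        rw [div_pow]; field_simp
      rw [heq]; exact hexp

    have hnorm : ‖A ^ q * Real.exp (-b / A)‖ = A ^ q * Real.exp (-b / A) := by
      rw [Real.norm_eq_abs, abs_of_nonneg (base_nonneg b q hA0)]
    rw [hnorm]
    have h5 : A ^ q * Real.exp (-b / A) ≤ A ^ q * ((k.factorial : ℝ) * A ^ k / b ^ k) :=
      mul_le_mul_of_nonneg_left hexp2 (Real.rpow_pos_of_pos hA0 q).le
    refine le_trans h5 ?_
    have hpow : A ^ q * (A:ℝ) ^ k = A ^ (q + (k:ℝ)) := by
      rw [← Real.rpow_natCast A k, ← Real.rpow_add hA0]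
    have hle1 : A ^ (q + (k:ℝ)) ≤ 1 :=
      Real.rpow_le_one (le_of_lt hA0) hA1 (by linarith)
    calc A ^ q * ((k.factorial : ℝ) * A ^ k / b ^ k)
        = (A ^ q * A ^ k) * ((k.factorial : ℝ) / b ^ k) := by ring
      _ = A ^ (q + (k:ℝ)) * ((k.factorial : ℝ) / b ^ k) := by rw [hpow]
      _ ≤ 1 * ((k.factorial : ℝ) / b ^ k) := by
          apply mul_le_mul_of_nonneg_right hle1 (by positivity)
      _ = (k.factorial : ℝ) / b ^ k := one_mul _
  have h2 : IntegrableOn (fun A : ℝ => A ^ q * Real.exp (-b / A)) (Ioi 1) := by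
    refine Integrable.mono' (integrableOn_Ioi_rpow_of_lt hq one_pos)
      (hmeas.aestronglyMeasurable) ?_
    rw [ae_restrict_iff' measurableSet_Ioi]
    refine Filter.Eventually.of_forall (fun A hA => ?_)
    have hA0 : (0:ℝ) < A := lt_trans one_pos hA
    rw [Real.norm_eq_abs, abs_of_nonneg (base_nonneg b q hA0)]
    calc A ^ q * Real.exp (-b / A) ≤ A ^ q * 1 := by
          apply mul_le_mul_of_nonneg_left _ (Real.rpow_pos_of_pos hA0 q).le
          rw [Real.exp_le_one_iff, neg_div]
          have : (0:ℝ) < b / A := by positivity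
          linarith
      _ = A ^ q := mul_one _
  have := h1.union h2
  rwa [Ioc_union_Ioi_eq_Ioi (zero_le_one)] at this

lemma int_w (b V c q r : ℝ) (hb : 0 < b) (hV : 0 < V) (hc : 0 < c) (hq : q < -1) (hr : 0 ≤ r) :
    IntegrableOn (fun A : ℝ => A ^ q * Real.exp (-b / A) * Real.exp (r * gf V c A)) (Ioi 0) := by
  refine Integrable.mono' (int_base b q hb hq) ?_ ?_
  · exact ((base_meas b q).mul (Real.measurable_exp.comp
      ((gf_meas V c).const_mul r))).aestronglyMeasurable
  · rw [ae_restrict_iff' measurableSet_Ioi]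
    refine Filter.Eventually.of_forall (fun A hA => ?_)
    have hA0 : (0:ℝ) < A := hA
    rw [Real.norm_eq_abs, abs_of_nonneg (by positivity)]
    calc A ^ q * Real.exp (-b / A) * Real.exp (r * gf V c A)
        ≤ A ^ q * Real.exp (-b / A) * 1 := by
          apply mul_le_mul_of_nonneg_left _ (base_nonneg b q hA0)
          rw [Real.exp_le_one_iff]
          exact mul_nonpos_of_nonneg_of_nonpos hr (gf_nonpos hV hc hA0)
      _ = A ^ q * Real.exp (-b / A) := mul_one _
set_option maxHeartbeats 1000000 in
lemma core (a b V c : ℝ) (ha : 0 < a) (hb : 0 < b) (hV : 0 < V) (hc : 0 < c) :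
    Tendsto (fun r : ℝ =>
      (∫ A in Ioi (0:ℝ), A ^ (-a - 2) * Real.exp (-b / A) * Real.exp (r * gf V c A)) /
      (∫ A in Ioi (0:ℝ), A ^ (-a - 1) * Real.exp (-b / A) * Real.exp (r * gf V c A)))
      atTop (nhds (1 / c)) := by
  have hq2 : (-a - 2 : ℝ) < -1 := by linarith
  have hq1 : (-a - 1 : ℝ) < -1 := by linarith
  have hbase1 : IntegrableOn (fun A : ℝ => A ^ (-a - 1) * Real.exp (-b / A)) (Ioi 0) :=
    int_base b _ hb hq1
  have hbase2 : IntegrableOn (fun A : ℝ => A ^ (-a - 2) * Real.exp (-b / A)) (Ioi 0) :=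
    int_base b _ hb hq2
  rw [Metric.tendsto_atTop]
  intro ε hε
  -- choose δ
  set δ : ℝ := min (c / 2) (ε * c ^ 2 / 4) with hδdef
  have hδ0 : 0 < δ := lt_min (by positivity) (by positivity)
  have hδc2 : δ ≤ c / 2 := min_le_left _ _
  have hδε : δ ≤ ε * c ^ 2 / 4 := min_le_right _ _
  have hcδ0 : 0 < c - δ := by linarith
  -- choose η
  set η : ℝ := min (-gf V c (c - δ)) (-gf V c (c + δ)) with hηdef
  have hg1 : gf V c (c - δ) < 0 := gf_neg hV hc hcδ0 (by linarith)
  have hg2 : gf V c (c + δ) < 0 := gf_neg hV hc (by linarith) (by linarith)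
  have hη : 0 < η := lt_min (by linarith) (by linarith)
  -- far bound on g
  have hfar : ∀ A ∈ Ioi (0:ℝ) \ Ioo (c - δ) (c + δ), gf V c A ≤ -η := by
    rintro A ⟨hA0, hA2⟩
    rcases le_or_gt A (c - δ) with h | h
    · have h1 := gf_mono_left hV hc (mem_Ioi.mp hA0) h (by linarith)
      have h2 : η ≤ -gf V c (c - δ) := min_le_left _ _
      linarith
    · have hge : c + δ ≤ A := by
        by_contra hcon
        push_neg at hcon
        exact hA2 ⟨h, hcon⟩
      have h1 := gf_anti_right hV hc (by linarith : c ≤ c + δ) hge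
      have h2 : η ≤ -gf V c (c + δ) := min_le_right _ _
      linarith
  -- choose δ' for the near interval
  obtain ⟨δ₁, hδ₁0, hδ₁⟩ := Metric.continuousAt_iff.mp (gf_contAt hV hc) (η / 2) (by positivity)
  set δ' : ℝ := min δ (δ₁ / 2) with hδ'def
  have hδ'0 : 0 < δ' := lt_min hδ0 (by positivity)
  have hnear : ∀ A ∈ Ioc c (c + δ'), -(η / 2) ≤ gf V c A := by
    intro A hA
    have hd : dist A c < δ₁ := by
      rw [Real.dist_eq, abs_of_nonneg (by linarith [hA.1] : (0:ℝ) ≤ A - c)]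
      have h1 := hA.2
      have h2 : δ' ≤ δ₁ / 2 := min_le_right _ _
      linarith
    have h2 := hδ₁ hd
    rw [gf_self hV hc, dist_zero_right, Real.norm_eq_abs] at h2
    have := abs_lt.mp h2
    linarith [this.1]
  -- κ
  have hIoc_sub : Ioc c (c + δ') ⊆ Ioi (0:ℝ) := fun A hA => lt_trans hc hA.1
  set κ : ℝ := ∫ A in Ioc c (c + δ'), A ^ (-a - 1) * Real.exp (-b / A) with hκdef
  have hκpos : 0 < κ := by
    set m : ℝ := (c + δ') ^ (-a - 1 : ℝ) * Real.exp (-b / c) with hm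
    have hm0 : 0 < m := by positivity
    have hlow : ∀ A ∈ Ioc c (c + δ'), m ≤ A ^ (-a - 1 : ℝ) * Real.exp (-b / A) := by
      intro A hA
      have hA0 : 0 < A := lt_trans hc hA.1
      have h1 : (c + δ') ^ (-a - 1 : ℝ) ≤ A ^ (-a - 1 : ℝ) :=
        Real.rpow_le_rpow_of_nonpos hA0 hA.2 (by linarith)
      have h2 : Real.exp (-b / c) ≤ Real.exp (-b / A) := by
        rw [Real.exp_le_exp, neg_div, neg_div, neg_le_neg_iff]
        exact div_le_div_of_nonneg_left hb.le hc hA.1.le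
      exact mul_le_mul h1 h2 (Real.exp_pos _).le (Real.rpow_pos_of_pos hA0 _).le
    have hint := setIntegral_ge_of_const_le measurableSet_Ioc
      (by rw [Real.volume_Ioc]; exact ENNReal.ofReal_ne_top) hlow (hbase1.mono_set hIoc_sub)
    have hvol : (volume (Ioc c (c + δ'))).toReal = δ' := by
      rw [Real.volume_Ioc, ENNReal.toReal_ofReal (by linarith)]
      ring
    rw [measureReal_def, hvol, smul_eq_mul, mul_comm δ' m] at hint
    rw [hκdef]
    calc (0:ℝ) < m * δ' := mul_pos hm0 hδ'0
      _ ≤ _ := hint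
  -- C0
  set C0 : ℝ := ∫ A in Ioi (0:ℝ),
      (A ^ (-a - 2) + c⁻¹ * A ^ (-a - 1)) * Real.exp (-b / A) with hC0def
  have hC0int : IntegrableOn
      (fun A : ℝ => (A ^ (-a - 2) + c⁻¹ * A ^ (-a - 1)) * Real.exp (-b / A)) (Ioi 0) := by
    have h := hbase2.add (hbase1.const_mul c⁻¹)
    exact h.congr (ae_of_all _ fun A => by simp only [Pi.add_apply]; ring)
  have hC0nn : 0 ≤ C0 := setIntegral_nonneg measurableSet_Ioi (fun A hA => by
    have : (0:ℝ) < A := hA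
    positivity)
  -- eventual smallness
  have hev1 : ∀ᶠ r : ℝ in atTop, C0 / κ * Real.exp (-(r * η) / 2) < ε / 2 := by
    have h1 : Tendsto (fun r : ℝ => r * η / 2) atTop atTop :=
      (Filter.tendsto_id.atTop_mul_const hη).atTop_div_const two_pos
    have h2 : Tendsto (fun r : ℝ => Real.exp (-(r * η) / 2)) atTop (nhds 0) := by
      have := Real.tendsto_exp_neg_atTop_nhds_zero.comp h1
      refine this.congr (fun r => ?_)
      simp [Function.comp, neg_div]
    have h3 : Tendsto (fun r : ℝ => C0 / κ * Real.exp (-(r * η) / 2)) atTop (nhds 0) := by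
      simpa using h2.const_mul (C0 / κ)
    exact h3.eventually_lt_const (by positivity)
  obtain ⟨R, hR⟩ := Filter.eventually_atTop.mp (hev1.and (eventually_ge_atTop (0:ℝ)))
  refine ⟨R, fun r hr => ?_⟩
  obtain ⟨hrε, hr0⟩ := hR r hr
  -- integrability of weighted functions
  have hw2int : IntegrableOn
      (fun A : ℝ => A ^ (-a - 2) * Real.exp (-b / A) * Real.exp (r * gf V c A)) (Ioi 0) :=
    int_w b V c _ r hb hV hc hq2 hr0
  have hw1int : IntegrableOn
      (fun A : ℝ => A ^ (-a - 1) * Real.exp (-b / A) * Real.exp (r * gf V c A)) (Ioi 0) :=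
    int_w b V c _ r hb hV hc hq1 hr0
  set Nr : ℝ := ∫ A in Ioi (0:ℝ), A ^ (-a - 2) * Real.exp (-b / A) * Real.exp (r * gf V c A)
    with hNrdef
  set Dr : ℝ := ∫ A in Ioi (0:ℝ), A ^ (-a - 1) * Real.exp (-b / A) * Real.exp (r * gf V c A)
    with hDrdef
  -- Step A : lower bound on Dr
  have hDlow : Real.exp (-(r * η) / 2) * κ ≤ Dr := by
    have hsub : (∫ A in Ioc c (c + δ'),
        A ^ (-a - 1) * Real.exp (-b / A) * Real.exp (r * gf V c A)) ≤ Dr := by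
      refine setIntegral_mono_set hw1int ?_ (HasSubset.Subset.eventuallyLE hIoc_sub)
      filter_upwards [ae_restrict_mem measurableSet_Ioi] with A hA
      have : (0:ℝ) < A := hA
      positivity
    have hmono : (∫ A in Ioc c (c + δ'),
        Real.exp (-(r * η) / 2) * (A ^ (-a - 1) * Real.exp (-b / A))) ≤
        ∫ A in Ioc c (c + δ'),
        A ^ (-a - 1) * Real.exp (-b / A) * Real.exp (r * gf V c A) := by
      refine setIntegral_mono_on ((hbase1.mono_set hIoc_sub).const_mul _)
        (hw1int.mono_set hIoc_sub) measurableSet_Ioc ?_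
      intro A hA
      have hA0 : 0 < A := lt_trans hc hA.1
      have hg : -(η / 2) ≤ gf V c A := hnear A hA
      have hexp : Real.exp (-(r * η) / 2) ≤ Real.exp (r * gf V c A) := by
        rw [Real.exp_le_exp]
        calc -(r * η) / 2 = r * -(η / 2) := by ring
          _ ≤ r * gf V c A := mul_le_mul_of_nonneg_left hg hr0
      have hbpos : (0:ℝ) ≤ A ^ (-a - 1 : ℝ) * Real.exp (-b / A) := by positivity
      calc Real.exp (-(r * η) / 2) * (A ^ (-a - 1 : ℝ) * Real.exp (-b / A))
          ≤ Real.exp (r * gf V c A) * (A ^ (-a - 1 : ℝ) * Real.exp (-b / A)) :=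
            mul_le_mul_of_nonneg_right hexp hbpos
        _ = A ^ (-a - 1 : ℝ) * Real.exp (-b / A) * Real.exp (r * gf V c A) := by ring
    have heq : (∫ A in Ioc c (c + δ'),
        Real.exp (-(r * η) / 2) * (A ^ (-a - 1) * Real.exp (-b / A))) =
        Real.exp (-(r * η) / 2) * κ := by
      rw [hκdef]
      exact integral_const_mul _ _
    linarith
  have hD0 : 0 < Dr := lt_of_lt_of_le (mul_pos (Real.exp_pos _) hκpos) hDlow
  have hDne : Dr ≠ 0 := hD0.ne'
  have hκne : κ ≠ 0 := hκpos.ne'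
  -- Step B : numerator bound
  set F : ℝ → ℝ := fun A =>
    (A ^ (-a - 2) - c⁻¹ * A ^ (-a - 1)) * Real.exp (-b / A) * Real.exp (r * gf V c A)
    with hFdef
  have hEeq : Nr - c⁻¹ * Dr = ∫ A in Ioi (0:ℝ), F A := by
    have h1 : c⁻¹ * Dr = ∫ A in Ioi (0:ℝ),
        c⁻¹ * (A ^ (-a - 1) * Real.exp (-b / A) * Real.exp (r * gf V c A)) :=
      (integral_const_mul _ _).symm
    rw [hNrdef, h1, ← integral_sub hw2int (hw1int.const_mul c⁻¹)]
    exact integral_congr_ae (ae_of_all _ fun A => by simp only [Pi.sub_apply, hFdef]; ring)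
  have hFint : IntegrableOn F (Ioi 0) :=
    (hw2int.sub (hw1int.const_mul c⁻¹)).congr (ae_of_all _ fun A => by simp only [Pi.sub_apply, hFdef]; ring)
  have hIoo_sub : Ioo (c - δ) (c + δ) ⊆ Ioi (0:ℝ) := fun A hA => lt_trans hcδ0 hA.1
  have habs : |Nr - c⁻¹ * Dr| ≤ ∫ A in Ioi (0:ℝ), |F A| := by
    rw [hEeq]
    simpa [Real.norm_eq_abs] using norm_integral_le_integral_norm (μ := volume.restrict (Ioi 0)) F
  have hsplit : (∫ A in Ioi (0:ℝ), |F A|) =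
      (∫ A in Ioo (c - δ) (c + δ), |F A|) + ∫ A in Ioi (0:ℝ) \ Ioo (c - δ) (c + δ), |F A| := by
    conv_lhs => rw [← union_diff_cancel hIoo_sub]
    exact setIntegral_union disjoint_sdiff_right (measurableSet_Ioi.diff measurableSet_Ioo)
      ((hFint.mono_set hIoo_sub).abs) ((hFint.mono_set diff_subset).abs)
  -- near piece
  have hnearbound : (∫ A in Ioo (c - δ) (c + δ), |F A|) ≤ ε / 2 * Dr := by
    have h1 : (∫ A in Ioo (c - δ) (c + δ), |F A|) ≤ ∫ A in Ioo (c - δ) (c + δ),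
        ε / 2 * (A ^ (-a - 1) * Real.exp (-b / A) * Real.exp (r * gf V c A)) := by
      refine setIntegral_mono_on ((hFint.mono_set hIoo_sub).abs)
        ((hw1int.mono_set hIoo_sub).const_mul _) measurableSet_Ioo ?_
      intro A hA
      have hA0 : 0 < A := lt_trans hcδ0 hA.1
      have hsplit2 : A ^ (-a - 2 : ℝ) = A ^ (-a - 1 : ℝ) * A⁻¹ := by
        rw [← Real.rpow_neg_one A, ← Real.rpow_add hA0]
        congr 1
        ring
      have hinv : |A⁻¹ - c⁻¹| ≤ ε / 2 := by
        have hAc : c / 2 ≤ A := by linarith [hA.1]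
        have h3 : |c - A| ≤ δ := abs_le.mpr ⟨by linarith [hA.2], by linarith [hA.1]⟩
        have h4 : A⁻¹ - c⁻¹ = (c - A) / (A * c) := by field_simp
        rw [h4, abs_div, abs_of_pos (mul_pos hA0 hc)]
        have h5 : |c - A| / (A * c) ≤ δ / (c / 2 * c) :=
          div_le_div₀ hδ0.le h3 (by positivity) (mul_le_mul_of_nonneg_right hAc hc.le)
        have h6 : δ / (c / 2 * c) ≤ ε * c ^ 2 / 4 / (c / 2 * c) :=
          (div_le_div_iff_of_pos_right (by positivity)).mpr hδε
        have h7 : ε * c ^ 2 / 4 / (c / 2 * c) = ε / 2 := by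
          rw [div_eq_div_iff (by positivity) (by norm_num : (2:ℝ) ≠ 0)]
          ring
        linarith
      have hFabs : |F A| = |A⁻¹ - c⁻¹| *
          (A ^ (-a - 1 : ℝ) * Real.exp (-b / A) * Real.exp (r * gf V c A)) := by
        have hFA : F A = (A⁻¹ - c⁻¹) *
            (A ^ (-a - 1 : ℝ) * Real.exp (-b / A) * Real.exp (r * gf V c A)) := by
          simp only [hFdef]
          rw [hsplit2]
          ring
        rw [hFA, abs_mul, abs_of_nonneg (by positivity :
          (0:ℝ) ≤ A ^ (-a - 1 : ℝ) * Real.exp (-b / A) * Real.exp (r * gf V c A))]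
      rw [hFabs]
      exact mul_le_mul_of_nonneg_right hinv (by positivity)
    have h2 : (∫ A in Ioo (c - δ) (c + δ),
        ε / 2 * (A ^ (-a - 1) * Real.exp (-b / A) * Real.exp (r * gf V c A))) ≤ ε / 2 * Dr := by
      rw [integral_const_mul]
      refine mul_le_mul_of_nonneg_left ?_ (by positivity)
      refine setIntegral_mono_set hw1int ?_ (HasSubset.Subset.eventuallyLE hIoo_sub)
      filter_upwards [ae_restrict_mem measurableSet_Ioi] with A hA
      have : (0:ℝ) < A := hA
      positivity
    linarith
  -- far piece
  have hfarbound : (∫ A in Ioi (0:ℝ) \ Ioo (c - δ) (c + δ), |F A|) ≤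
      Real.exp (-(r * η)) * C0 := by
    have h1 : (∫ A in Ioi (0:ℝ) \ Ioo (c - δ) (c + δ), |F A|) ≤
        ∫ A in Ioi (0:ℝ) \ Ioo (c - δ) (c + δ),
          Real.exp (-(r * η)) * ((A ^ (-a - 2) + c⁻¹ * A ^ (-a - 1)) * Real.exp (-b / A)) := by
      refine setIntegral_mono_on ((hFint.mono_set diff_subset).abs)
        ((hC0int.mono_set diff_subset).const_mul _)
        (measurableSet_Ioi.diff measurableSet_Ioo) ?_
      intro A hA
      have hA0 : (0:ℝ) < A := hA.1
      have hgA : gf V c A ≤ -η := hfar A hA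
      have hexp : Real.exp (r * gf V c A) ≤ Real.exp (-(r * η)) := by
        rw [Real.exp_le_exp]
        calc r * gf V c A ≤ r * -η := mul_le_mul_of_nonneg_left hgA hr0
          _ = -(r * η) := by ring
      have htri : |A ^ (-a - 2 : ℝ) - c⁻¹ * A ^ (-a - 1 : ℝ)| ≤
          A ^ (-a - 2 : ℝ) + c⁻¹ * A ^ (-a - 1 : ℝ) := by
        have h1 : (0:ℝ) ≤ A ^ (-a - 2 : ℝ) := (Real.rpow_pos_of_pos hA0 _).le
        have h2 : (0:ℝ) ≤ c⁻¹ * A ^ (-a - 1 : ℝ) := by positivity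
        rw [abs_sub_le_iff]
        constructor <;> linarith
      have hFabs2 : |F A| = |A ^ (-a - 2 : ℝ) - c⁻¹ * A ^ (-a - 1 : ℝ)| *
          (Real.exp (-b / A) * Real.exp (r * gf V c A)) := by
        simp only [hFdef]
        rw [mul_assoc, abs_mul, abs_of_nonneg (by positivity :
          (0:ℝ) ≤ Real.exp (-b / A) * Real.exp (r * gf V c A))]
      rw [hFabs2]
      calc |A ^ (-a - 2 : ℝ) - c⁻¹ * A ^ (-a - 1 : ℝ)| *
            (Real.exp (-b / A) * Real.exp (r * gf V c A))
          ≤ (A ^ (-a - 2 : ℝ) + c⁻¹ * A ^ (-a - 1 : ℝ)) *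
            (Real.exp (-b / A) * Real.exp (r * gf V c A)) :=
            mul_le_mul_of_nonneg_right htri (by positivity)
        _ ≤ (A ^ (-a - 2 : ℝ) + c⁻¹ * A ^ (-a - 1 : ℝ)) *
            (Real.exp (-b / A) * Real.exp (-(r * η))) := by
            refine mul_le_mul_of_nonneg_left ?_ (by positivity)
            exact mul_le_mul_of_nonneg_left hexp (Real.exp_pos _).le
        _ = Real.exp (-(r * η)) *
            ((A ^ (-a - 2 : ℝ) + c⁻¹ * A ^ (-a - 1 : ℝ)) * Real.exp (-b / A)) := by ring
    have h2 : (∫ A in Ioi (0:ℝ) \ Ioo (c - δ) (c + δ),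
        Real.exp (-(r * η)) * ((A ^ (-a - 2) + c⁻¹ * A ^ (-a - 1)) * Real.exp (-b / A))) ≤
        Real.exp (-(r * η)) * C0 := by
      rw [integral_const_mul]
      refine mul_le_mul_of_nonneg_left ?_ (Real.exp_pos _).le
      refine setIntegral_mono_set hC0int ?_ (HasSubset.Subset.eventuallyLE diff_subset)
      filter_upwards [ae_restrict_mem measurableSet_Ioi] with A hA
      have : (0:ℝ) < A := hA
      positivity
    linarith
  -- Step C : conclude
  have hEbound : |Nr - c⁻¹ * Dr| ≤ ε / 2 * Dr + Real.exp (-(r * η)) * C0 := by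
    rw [hsplit] at habs
    linarith
  have hratio : |Nr / Dr - 1 / c| < ε := by
    have h1 : Nr / Dr - 1 / c = (Nr - c⁻¹ * Dr) / Dr := by
      rw [sub_div, mul_div_assoc, div_self hDne, mul_one, one_div]
    rw [h1, abs_div, abs_of_pos hD0]
    rw [div_lt_iff₀ hD0]
    have h2 : Real.exp (-(r * η)) * C0 ≤ C0 / κ * Real.exp (-(r * η) / 2) * Dr := by
      have h3 : Real.exp (-(r * η)) = Real.exp (-(r * η) / 2) * Real.exp (-(r * η) / 2) := by
        rw [← Real.exp_add]
        ring_nf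
      have h4 : Real.exp (-(r * η)) * C0 =
          C0 / κ * Real.exp (-(r * η) / 2) * (Real.exp (-(r * η) / 2) * κ) := by
        rw [h3, div_mul_eq_mul_div, div_mul_eq_mul_div, eq_div_iff hκne]
        ring
      rw [h4]
      exact mul_le_mul_of_nonneg_left hDlow
        (mul_nonneg (div_nonneg hC0nn hκpos.le) (Real.exp_pos _).le)
    have h5 : C0 / κ * Real.exp (-(r * η) / 2) * Dr < ε / 2 * Dr :=
      (mul_lt_mul_of_pos_right hrε hD0)
    linarith [hEbound, h2, h5]
  rw [Real.dist_eq]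
  exact hratio
lemma ratio_eq (q b V c t : ℝ) (hV : 0 < V) (hc : 0 < c) {A : ℝ} (hA : 0 < A) :
    A ^ q * Real.exp (-b / A) * (V + A) ^ (-(t / 2)) *
      Real.exp (-(t * (c + V)) / (2 * (V + A))) =
    Real.exp (-(t / 2 * (Real.log (c + V) + 1))) *
      (A ^ q * Real.exp (-b / A) * Real.exp (t / 2 * gf V c A)) := by
  have hVA : (0:ℝ) < V + A := by linarith
  have hcV : (0:ℝ) < c + V := by linarith
  have hgf : gf V c A = Real.log (c + V) - Real.log (V + A) - (c + V) / (V + A) + 1 := by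
    unfold gf
    rw [Real.log_div hcV.ne' hVA.ne']
  rw [Real.rpow_def_of_pos hVA, hgf]
  have hexpo : -b / A + (Real.log (V + A) * (-(t / 2)) + -(t * (c + V)) / (2 * (V + A))) =
      -(t / 2 * (Real.log (c + V) + 1)) +
      (-b / A + t / 2 * (Real.log (c + V) - Real.log (V + A) - (c + V) / (V + A) + 1)) := by
    field_simp
    ring
  calc A ^ q * Real.exp (-b / A) * Real.exp (Real.log (V + A) * (-(t / 2))) *
        Real.exp (-(t * (c + V)) / (2 * (V + A)))
      = A ^ q * Real.exp (-b / A +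
          (Real.log (V + A) * (-(t / 2)) + -(t * (c + V)) / (2 * (V + A)))) := by
        rw [Real.exp_add, Real.exp_add]; ring
    _ = A ^ q * Real.exp (-(t / 2 * (Real.log (c + V) + 1)) +
          (-b / A + t / 2 * (Real.log (c + V) - Real.log (V + A) - (c + V) / (V + A) + 1))) := by
        rw [hexpo]
    _ = Real.exp (-(t / 2 * (Real.log (c + V) + 1))) * (A ^ q * Real.exp (-b / A) *
          Real.exp (t / 2 * (Real.log (c + V) - Real.log (V + A) - (c + V) / (V + A) + 1))) := by
        rw [Real.exp_add, Real.exp_add]; ring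

theorem stmt_16 (a b V c : ℝ) (ha : 0 < a) (hb : 0 < b) (hV : 0 < V) (hc : 0 < c) :
    Tendsto (fun n : ℕ =>
      (∫ A in Set.Ioi (0 : ℝ), A ^ (-a - 2) * Real.exp (-b / A) *
          (V + A) ^ (-(((n : ℝ) - 1) / 2)) *
          Real.exp (-(((n : ℝ) - 1) * (c + V)) / (2 * (V + A)))) /
      (∫ A in Set.Ioi (0 : ℝ), A ^ (-a - 1) * Real.exp (-b / A) *
          (V + A) ^ (-(((n : ℝ) - 1) / 2)) *
          Real.exp (-(((n : ℝ) - 1) * (c + V)) / (2 * (V + A)))))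
      atTop (nhds (1 / c)) := by
  have hcomp : Tendsto (fun n : ℕ => ((n : ℝ) - 1) / 2) atTop atTop := by
    apply Tendsto.atTop_div_const two_pos
    have h := tendsto_atTop_add_const_right atTop (-1 : ℝ) tendsto_natCast_atTop_atTop
    simpa [sub_eq_add_neg] using h
  refine Tendsto.congr ?_ ((core a b V c ha hb hV hc).comp hcomp)
  intro n
  simp only [Function.comp]
  have hnum : (∫ A in Set.Ioi (0 : ℝ), A ^ (-a - 2) * Real.exp (-b / A) *
      (V + A) ^ (-(((n : ℝ) - 1) / 2)) *
      Real.exp (-(((n : ℝ) - 1) * (c + V)) / (2 * (V + A)))) =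
      Real.exp (-(((n : ℝ) - 1) / 2 * (Real.log (c + V) + 1))) *
      ∫ A in Set.Ioi (0 : ℝ), A ^ (-a - 2) * Real.exp (-b / A) *
        Real.exp (((n : ℝ) - 1) / 2 * gf V c A) := by
    rw [← integral_const_mul]
    refine setIntegral_congr_fun measurableSet_Ioi (fun A hA => ?_)
    exact ratio_eq (-a - 2) b V c ((n : ℝ) - 1) hV hc hA
  have hden : (∫ A in Set.Ioi (0 : ℝ), A ^ (-a - 1) * Real.exp (-b / A) *
      (V + A) ^ (-(((n : ℝ) - 1) / 2)) *
      Real.exp (-(((n : ℝ) - 1) * (c + V)) / (2 * (V + A)))) =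
      Real.exp (-(((n : ℝ) - 1) / 2 * (Real.log (c + V) + 1))) *
      ∫ A in Set.Ioi (0 : ℝ), A ^ (-a - 1) * Real.exp (-b / A) *
        Real.exp (((n : ℝ) - 1) / 2 * gf V c A) := by
    rw [← integral_const_mul]
    refine setIntegral_congr_fun measurableSet_Ioi (fun A hA => ?_)
    exact ratio_eq (-a - 1) b V c ((n : ℝ) - 1) hV hc hA
  rw [hnum, hden, mul_div_mul_left _ _ (Real.exp_ne_zero _)]
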